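/- Let c : ℕ → ℤ be a sequence such that for every m ≥ 1 and every prime p dividing m one has c_m ≡ c_{m/p} (mod p^{ord_p(m)}), where ord_p(m) is the exponent of p in m. Then for every n ≥ 1, n divides Σ_{d|n} μ(n/d)·c_d·2^d, where μ is the Möbius function and the sum runs over the positive divisors d of n. -/

import Mathlib

open Finset ArithmeticFunction
open scoped ArithmeticFunction.Moebius

-- Lemma A: Euler step for the power of 2
lemma powA (p k e : ℕ) (hp : p.Prime) (hk : 1 ≤ k) (he : 1 ≤ e) :
    ((p:ℤ))^k ∣ 2^(p^k*e) - 2^(p^(k-1)*e) := by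
  obtain ⟨k', rfl⟩ : ∃ k', k = k'+1 := ⟨k-1, by omega⟩
  simp only [Nat.add_sub_cancel]
  rcases eq_or_ne p 2 with rfl | hodd
  · -- both exponents ≥ k'+1
    have h1 : k'+1 ≤ 2^k'*e := by
      calc k'+1 ≤ 2^k' := by have := @Nat.lt_two_pow_self k'; omega
        _ ≤ 2^k'*e := Nat.le_mul_of_pos_right _ he
    have h2 : k'+1 ≤ 2^(k'+1)*e := le_trans h1 (Nat.mul_le_mul_right e (Nat.pow_le_pow_right (by norm_num) (by omega)))
    push_cast
    exact dvd_sub (pow_dvd_pow (2:ℤ) h2) (pow_dvd_pow (2:ℤ) h1)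
  · have hcop : Nat.Coprime 2 (p^(k'+1)) :=
      (Nat.coprime_primes Nat.prime_two hp).mpr (Ne.symm hodd) |>.pow_right _
    have heuler : (p^(k'+1) : ℕ) ∣ 2^(Nat.totient (p^(k'+1))) - 1 :=
      (Nat.modEq_iff_dvd' (Nat.one_le_two_pow)).mp (Nat.ModEq.pow_totient hcop).symm
    have htot : Nat.totient (p^(k'+1)) = p^k' * (p-1) := Nat.totient_prime_pow hp (by omega)
    -- key exponent identity
    have hexp : p^(k'+1)*e = p^k'*e + (Nat.totient (p^(k'+1)))*e := by
      rw [htot, pow_succ]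
      have h : p = 1 + (p-1) := by have := hp.two_le; omega
      calc p^k' * p * e = p^k' * (1 + (p-1)) * e := by rw [← h]
        _ = p^k'*e + p^k'*(p-1)*e := by ring
    have hdvd2 : (p:ℤ)^(k'+1) ∣ (2^(Nat.totient (p^(k'+1))))^e - 1 := by
      have h1 : ((p:ℤ))^(k'+1) ∣ (2:ℤ)^(Nat.totient (p^(k'+1))) - 1 := by
        have := Int.natCast_dvd_natCast.mpr heuler
        push_cast [Nat.one_le_two_pow] at this
        exact_mod_cast this
      exact h1.trans (by simpa using sub_dvd_pow_sub_pow ((2:ℤ)^(Nat.totient (p^(k'+1)))) 1 e)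
    have : (2:ℤ)^(p^(k'+1)*e) - 2^(p^k'*e) = 2^(p^k'*e) * ((2^(Nat.totient (p^(k'+1))))^e - 1) := by
      rw [hexp, pow_add, ← pow_mul]
      ring
    rw [this]
    exact hdvd2.mul_left _

-- Lemma C: per-prime divisibility
lemma perPrime (c : ℕ → ℤ)
    (hc : ∀ m : ℕ, 1 ≤ m → ∀ p : ℕ, p.Prime → p ∣ m →
      c m ≡ c (m / p) [ZMOD (p : ℤ) ^ (m.factorization p)])
    (n : ℕ) (hn : 1 ≤ n) (p : ℕ) (hp : p.Prime) :
    (p:ℤ) ^ (n.factorization p) ∣ ∑ d ∈ n.divisors,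
        (ArithmeticFunction.moebius (n / d) : ℤ) * c d * 2 ^ d := by
  rcases Nat.eq_zero_or_pos (n.factorization p) with h0 | hpos
  · simp [h0]
  obtain ⟨k', hk⟩ : ∃ k', n.factorization p = k'+1 := ⟨_, (Nat.succ_pred_eq_of_pos hpos).symm⟩
  set k := k'+1 with hkdef
  rw [hk]
  set m := n / p^k with hm
  have hn0 : n ≠ 0 := by omega
  have hnm : n = p^k * m := by
    rw [hm, ← hk]; exact (Nat.ordProj_mul_ordCompl_eq_self n p).symm
  have hpm : ¬ p ∣ m := by rw [hm, ← hk]; exact Nat.not_dvd_ordCompl hp hn0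
  have hm0 : m ≠ 0 := by intro h; rw [h, mul_zero] at hnm; exact hn0 hnm
  have hp0 : 0 < p := hp.pos
  -- Step 1: restrict to divisors divisible by p^k'
  have step1 : ∑ d ∈ n.divisors, (μ (n / d) : ℤ) * c d * 2 ^ d
      = ∑ d ∈ n.divisors.filter (p^k' ∣ ·), (μ (n / d) : ℤ) * c d * 2 ^ d := by
    refine (Finset.sum_subset (Finset.filter_subset _ _) ?_).symm
    intro d hd hnd
    rw [Finset.mem_filter, not_and] at hnd
    have hdn : d ∣ n := (Nat.mem_divisors.mp hd).1
    have hd0 : d ≠ 0 := by rintro rfl; exact hn0 (Nat.eq_zero_of_zero_dvd hdn)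
    have hvd : d.factorization p < k' := by
      by_contra hle
      exact hnd (hd) ((Nat.Prime.pow_dvd_iff_le_factorization hp hd0).mpr (by omega))
    have hsq : ¬ Squarefree (n / d) := by
      intro hsf
      have hfd : (n/d).factorization p = k - d.factorization p := by
        rw [Nat.factorization_div hdn]; simp [hk]
      have h2 : p^2 ∣ n / d := by
        refine (Nat.Prime.pow_dvd_iff_le_factorization hp ?_).mpr (by omega)
        exact Nat.div_ne_zero_iff_of_dvd hdn |>.mpr ⟨hn0, hd0⟩
      have := hsf p ((pow_two p) ▸ h2)
      rw [Nat.isUnit_iff] at this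
      exact hp.ne_one this
    simp [ArithmeticFunction.moebius_eq_zero_of_not_squarefree hsq]
  -- Step 2: bijection with divisors of p*m
  have step2 : ∑ d ∈ n.divisors.filter (p^k' ∣ ·), (μ (n / d) : ℤ) * c d * 2 ^ d
      = ∑ e ∈ (p*m).divisors, (μ ((p*m) / e) : ℤ) * c (p^k'*e) * 2 ^ (p^k'*e) := by
    refine Finset.sum_nbij' (fun d => d / p^k') (fun e => p^k' * e) ?_ ?_ ?_ ?_ ?_
    · intro d hd
      rw [Finset.mem_filter] at hd
      obtain ⟨hd1, hd2⟩ := hd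
      obtain ⟨e, rfl⟩ := hd2
      have hdn : p^k' * e ∣ n := (Nat.mem_divisors.mp hd1).1
      rw [Nat.mul_div_cancel_left e (pow_pos hp0 k')]
      rw [Nat.mem_divisors]
      refine ⟨?_, by positivity⟩
      have : p^k' * e ∣ p^k' * (p*m) := by
        rw [show p^k' * (p*m) = p^k*m by rw [hkdef]; ring, ← hnm]; exact hdn
      exact (Nat.mul_dvd_mul_iff_left (pow_pos hp0 k')).mp this
    · intro e he
      rw [Finset.mem_filter]
      constructor
      · rw [Nat.mem_divisors]
        refine ⟨?_, hn0⟩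
        have : e ∣ p*m := (Nat.mem_divisors.mp he).1
        calc p^k'*e ∣ p^k'*(p*m) := Nat.mul_dvd_mul_left _ this
          _ = n := by rw [hnm, hkdef]; ring
      · exact Dvd.intro e rfl
    · intro d hd
      rw [Finset.mem_filter] at hd
      exact Nat.mul_div_cancel' hd.2
    · intro e _
      exact Nat.mul_div_cancel_left e (pow_pos hp0 k')
    · intro d hd
      rw [Finset.mem_filter] at hd
      obtain ⟨e, rfl⟩ := hd.2
      rw [Nat.mul_div_cancel_left e (pow_pos hp0 k')]
      congr 2
      rw [hnm, show p^k*m = p^k'*(p*m) by rw [hkdef]; ring,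
        Nat.mul_div_mul_left _ _ (pow_pos hp0 k')]
  -- Step 3: split divisors of p*m
  have hdisj : Disjoint m.divisors (m.divisors.image (p * ·)) := by
    rw [Finset.disjoint_left]
    intro a ha hb
    rw [Finset.mem_image] at hb
    obtain ⟨b, hbm, rfl⟩ := hb
    exact hpm ((dvd_mul_right p b).trans (Nat.mem_divisors.mp ha).1)
  have hsplit : (p*m).divisors = m.divisors ∪ m.divisors.image (p * ·) := by
    ext d
    simp only [Nat.mem_divisors, Finset.mem_union, Finset.mem_image]
    constructor
    · rintro ⟨hd, -⟩
      by_cases hpd : p ∣ d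
      · obtain ⟨e, rfl⟩ := hpd
        right
        exact ⟨e, ⟨(Nat.mul_dvd_mul_iff_left hp0).mp hd, hm0⟩, rfl⟩
      · left
        refine ⟨?_, hm0⟩
        have hcop : Nat.Coprime d p := Nat.coprime_comm.mp ((Nat.Prime.coprime_iff_not_dvd hp).mpr hpd)
        exact hcop.dvd_of_dvd_mul_left hd
    · rintro (⟨hd, -⟩ | ⟨e, ⟨he, -⟩, rfl⟩)
      · exact ⟨hd.mul_left p, by positivity⟩
      · exact ⟨Nat.mul_dvd_mul_left p he, by positivity⟩
  rw [step1, step2, hsplit, Finset.sum_union hdisj,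
    Finset.sum_image (fun a _ b _ h => (Nat.mul_left_cancel hp0 h)),
    ← Finset.sum_add_distrib]
  -- Step 4: termwise divisibility
  refine Finset.dvd_sum ?_
  intro e he
  obtain ⟨hem, -⟩ := Nat.mem_divisors.mp he
  have he1 : 1 ≤ e := Nat.pos_of_mem_divisors he
  have hpe : ¬ p ∣ e := fun h => hpm (h.trans hem)
  -- rewrite moebius values
  have h1 : (p*m)/e = p*(m/e) := Nat.mul_div_assoc p hem
  have h2 : (p*m)/(p*e) = m/e := Nat.mul_div_mul_left m e hp0
  have h3 : p^k' * (p*e) = p^k*e := by rw [hkdef]; ring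
  have hme0 : m/e ≠ 0 := Nat.div_ne_zero_iff_of_dvd hem |>.mpr ⟨hm0, by omega⟩
  have hcop : Nat.Coprime p (m/e) := by
    rw [Nat.Prime.coprime_iff_not_dvd hp]
    exact fun h => hpm (h.trans (Nat.div_dvd_of_dvd hem))
  have hmu : (μ ((p*m)/e) : ℤ) = - μ (m/e) := by
    rw [h1, ArithmeticFunction.isMultiplicative_moebius.map_mul_of_coprime hcop,
      ArithmeticFunction.moebius_apply_prime hp]
    push_cast; ring
  rw [hmu, h2, h3]
  have key : (p:ℤ)^k ∣ c (p^k*e) * 2^(p^k*e) - c (p^k'*e) * 2^(p^k'*e) := by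
    have hA : (p:ℤ)^k ∣ 2^(p^k*e) - 2^(p^(k-1)*e) := powA p k e hp (by omega) he1
    have hk1 : k - 1 = k' := by omega
    rw [hk1] at hA
    have hB : (p:ℤ)^k ∣ c (p^k*e) - c (p^k'*e) := by
      have hpos' : 1 ≤ p^k*e := Nat.mul_pos (pow_pos hp0 k) he1
      have hdvd : p ∣ p^k*e := Dvd.dvd.mul_right (dvd_pow_self p (by omega)) e
      have hfact : (p^k*e).factorization p = k := by
        rw [Nat.factorization_mul (by positivity) (by omega),
          Nat.Prime.factorization_pow hp]
        simp [Nat.factorization_eq_zero_of_not_dvd hpe]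
      have hdiv : (p^k*e) / p = p^k'*e := by
        rw [show p^k*e = p*(p^k'*e) by rw [hkdef]; ring,
          Nat.mul_div_cancel_left _ hp0]
      have := hc (p^k*e) hpos' p hp hdvd
      rw [hfact, hdiv] at this
      exact Int.ModEq.dvd this.symm
    calc (p:ℤ)^k ∣ c (p^k*e) * (2^(p^k*e) - 2^(p^k'*e))
          + (c (p^k*e) - c (p^k'*e)) * 2^(p^k'*e) :=
        dvd_add (hA.mul_left _) (hB.mul_right _)
      _ = c (p^k*e) * 2^(p^k*e) - c (p^k'*e) * 2^(p^k'*e) := by ring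
  have : (-(μ (m/e) : ℤ)) * c (p^k'*e) * 2^(p^k'*e) + (μ (m/e) : ℤ) * c (p^k*e) * 2^(p^k*e)
      = (μ (m/e) : ℤ) * (c (p^k*e) * 2^(p^k*e) - c (p^k'*e) * 2^(p^k'*e)) := by ring
  rw [this]
  exact key.mul_left _

theorem statement19 (c : ℕ → ℤ)
    (hc : ∀ m : ℕ, 1 ≤ m → ∀ p : ℕ, p.Prime → p ∣ m →
      c m ≡ c (m / p) [ZMOD (p : ℤ) ^ (m.factorization p)]) :
    ∀ n : ℕ, 1 ≤ n →
      (n : ℤ) ∣ ∑ d ∈ n.divisors,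
        (ArithmeticFunction.moebius (n / d) : ℤ) * c d * 2 ^ d := by
  intro n hn
  have hn0 : n ≠ 0 := by omega
  rw [Int.natCast_dvd, Nat.dvd_iff_prime_pow_dvd_dvd]
  intro p k hp hpk
  have hpp : p.Prime := hp
  have hk : k ≤ n.factorization p := (Nat.Prime.pow_dvd_iff_le_factorization hpp hn0).mp hpk
  have hmain := perPrime c hc n hn p hpp
  have h2 : p^(n.factorization p) ∣
      (∑ d ∈ n.divisors, (ArithmeticFunction.moebius (n / d) : ℤ) * c d * 2 ^ d).natAbs := by
    rw [← Int.natCast_dvd]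
    exact_mod_cast hmain
  exact (pow_dvd_pow p hk).trans h2
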